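/- For every n ≥ 5, if G is a graph on n vertices such that both G and its complement are connected, then rvc(G) + rvc(complement of G) ≤ n − 1. -/

import Mathlib

open SimpleGraph

/-- A coloring `c` (using colors `< k`) makes `G` rainbow vertex-connected: every pair of
vertices is joined by a path whose internal vertices receive distinct colors (all `< k`). -/
def IsRainbowVCColoring {V : Type*} (G : SimpleGraph V) (c : V → ℕ) (k : ℕ) : Prop :=
  ∀ u v : V, ∃ p : G.Walk u v, p.IsPath ∧
    (p.support.tail.dropLast.map c).Nodup ∧
    ∀ x ∈ p.support.tail.dropLast, c x < k

/-- The rainbow vertex-connection number: the least number of colors making `G`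
rainbow vertex-connected. -/
noncomputable def rvc {V : Type*} (G : SimpleGraph V) : ℕ :=
  sInf {k | ∃ c : V → ℕ, IsRainbowVCColoring G c k}

namespace RVCAux

variable {V : Type*}

lemma rvc_le {G : SimpleGraph V} {c : V → ℕ} {k : ℕ} (h : IsRainbowVCColoring G c k) :
    rvc G ≤ k :=
  Nat.sInf_le ⟨c, h⟩

lemma mem_dropLast_cons {α : Type*} {x : α} {l : List α} {w : α}
    (h : w ∈ (x :: l).dropLast) : w = x ∨ w ∈ l.dropLast := by
  cases l with
  | nil => simp at h
  | cons a t => simpa using h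

lemma internal_reverse {G : SimpleGraph V} {u v : V} (p : G.Walk u v) :
    p.reverse.support.tail.dropLast = p.support.tail.dropLast.reverse := by
  rw [Walk.support_reverse, List.tail_reverse, List.dropLast_reverse, List.tail_dropLast]

lemma internal_sublist {G : SimpleGraph V} {u v : V} (p : G.Walk u v) :
    List.Sublist (p.support.tail.dropLast) p.support :=
  (p.support.tail.dropLast_sublist).trans (p.support.tail_sublist)

lemma internal_nodup {G : SimpleGraph V} {u v : V} {p : G.Walk u v} (hp : p.IsPath) :
    (p.support.tail.dropLast).Nodup :=
  (internal_sublist p).nodup hp.support_nodup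

lemma start_not_internal {G : SimpleGraph V} {u v : V} {p : G.Walk u v} (hp : p.IsPath) :
    u ∉ p.support.tail.dropLast := by
  intro h
  have h2 := hp.support_nodup
  rw [p.support_eq_cons] at h2
  exact (List.nodup_cons.1 h2).1 (p.support.tail.dropLast_subset h)
lemma end_not_internal {G : SimpleGraph V} {u v : V} {p : G.Walk u v} (hp : p.IsPath) :
    v ∉ p.support.tail.dropLast := by
  intro h
  apply start_not_internal hp.reverse
  rw [internal_reverse, List.mem_reverse]
  exact h

lemma rvc_le_one {G : SimpleGraph V}
    (h : ∀ x y : V, x ≠ y → G.Adj x y ∨ ∃ w, G.Adj x w ∧ G.Adj w y) :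
    rvc G ≤ 1 := by
  apply rvc_le (c := fun _ => 0)
  intro u v
  rcases eq_or_ne u v with rfl | huv
  · exact ⟨Walk.nil, by simp, by simp, by simp⟩
  rcases h u v huv with hadj | ⟨w, h1, h2⟩
  · exact ⟨Walk.cons hadj Walk.nil, by simp [huv], by simp, by simp⟩
  · refine ⟨Walk.cons h1 (Walk.cons h2 Walk.nil), ?_, by simp, by simp⟩
    simp [Walk.cons_isPath_iff, huv, h1.ne, h1.ne', h2.ne, h2.ne']

lemma dom_of_not_diam2 {G : SimpleGraph V}
    (h : ¬ ∀ x y : V, x ≠ y → G.Adj x y ∨ ∃ w, G.Adj x w ∧ G.Adj w y) :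
    ∃ u v : V, Gᶜ.Adj u v ∧ ∀ z, z ≠ u → z ≠ v → Gᶜ.Adj z u ∨ Gᶜ.Adj z v := by
  push_neg at h
  obtain ⟨u, v, huv, hnadj, hw⟩ := h
  refine ⟨u, v, ⟨huv, hnadj⟩, ?_⟩
  intro z hzu hzv
  by_cases h1 : G.Adj u z
  · exact Or.inr ⟨hzv, fun hh => hw z h1 hh⟩
  · exact Or.inl ⟨hzu, fun hh => h1 hh.symm⟩

lemma rvc_le_two {G : SimpleGraph V} {u v : V} (huv : G.Adj u v)
    (hdom : ∀ z, z ≠ u → z ≠ v → G.Adj z u ∨ G.Adj z v) : rvc G ≤ 2 := by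
  classical
  have key : ∀ x y : V, ∃ p : G.Walk x y, p.IsPath ∧
      ∀ z ∈ p.support.tail.dropLast, z = u ∨ z = v := by
    have hswap : ∀ x y : V, (∃ p : G.Walk x y, p.IsPath ∧
        ∀ z ∈ p.support.tail.dropLast, z = u ∨ z = v) →
        ∃ p : G.Walk y x, p.IsPath ∧ ∀ z ∈ p.support.tail.dropLast, z = u ∨ z = v := by
      rintro x y ⟨p, hp, hs⟩
      exact ⟨p.reverse, hp.reverse,
        fun z hz => hs z (by rwa [internal_reverse, List.mem_reverse] at hz)⟩
    have oneSide : ∀ x y : V, x ≠ y → ¬ G.Adj x y → (x = u ∨ x = v) →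
        ∃ p : G.Walk x y, p.IsPath ∧ ∀ z ∈ p.support.tail.dropLast, z = u ∨ z = v := by
      rintro x y hxy hnadj (rfl | rfl)
      · -- x = u
        have hyv : y ≠ v := fun h => hnadj (h ▸ huv)
        have hy : G.Adj y v := by
          rcases hdom y (Ne.symm hxy) hyv with h | h
          · exact absurd h.symm hnadj
          · exact h
        refine ⟨Walk.cons huv (Walk.cons hy.symm Walk.nil), ?_, by simp⟩
        simp [Walk.cons_isPath_iff, hxy, huv.ne, hy.ne']
      · -- x = v
        have hyu : y ≠ u := fun h => hnadj (h ▸ huv.symm)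
        have hy : G.Adj y u := by
          rcases hdom y hyu (Ne.symm hxy) with h | h
          · exact h
          · exact absurd h.symm hnadj
        refine ⟨Walk.cons huv.symm (Walk.cons hy.symm Walk.nil), ?_, by simp⟩
        simp [Walk.cons_isPath_iff, hxy, huv.ne', hy.ne']
    intro x y
    rcases eq_or_ne x y with rfl | hxy
    · exact ⟨Walk.nil, by simp, by simp⟩
    by_cases hadj : G.Adj x y
    · exact ⟨Walk.cons hadj Walk.nil, by simp [hxy], by simp⟩
    by_cases hx : x = u ∨ x = v
    · exact oneSide x y hxy hadj hx
    by_cases hy : y = u ∨ y = v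
    · exact hswap y x (oneSide y x (Ne.symm hxy) (fun h => hadj h.symm) hy)
    push_neg at hx hy
    rcases hdom x hx.1 hx.2 with hxu | hxv <;> rcases hdom y hy.1 hy.2 with hyu | hyv
    · refine ⟨Walk.cons hxu (Walk.cons hyu.symm Walk.nil), ?_, by simp⟩
      simp [Walk.cons_isPath_iff, hxy, hxu.ne, hxu.ne', hyu.ne, hyu.ne']
    · refine ⟨Walk.cons hxu (Walk.cons huv (Walk.cons hyv.symm Walk.nil)), ?_, by simp⟩
      simp [Walk.cons_isPath_iff, hxy, hxu.ne, hxu.ne', hyv.ne, hyv.ne', hx.2, hy.1, hy.2,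
        huv.ne, huv.ne', Ne.symm hy.1, Ne.symm hy.2, Ne.symm hx.2]
    · refine ⟨Walk.cons hxv (Walk.cons huv.symm (Walk.cons hyu.symm Walk.nil)), ?_, by simp⟩
      simp [Walk.cons_isPath_iff, hxy, hxv.ne, hxv.ne', hyu.ne, hyu.ne', hx.1, hy.1, hy.2,
        huv.ne, huv.ne', Ne.symm hy.1, Ne.symm hy.2, Ne.symm hx.1]
    · refine ⟨Walk.cons hxv (Walk.cons hyv.symm Walk.nil), ?_, by simp⟩
      simp [Walk.cons_isPath_iff, hxy, hxv.ne, hxv.ne', hyv.ne, hyv.ne']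
  apply rvc_le (c := fun x => if x = u then 0 else 1)
  intro x y
  obtain ⟨p, hp, hsub⟩ := key x y
  refine ⟨p, hp, ?_, ?_⟩
  · refine List.Nodup.map_on ?_ (internal_nodup hp)
    intro z1 h1 z2 h2 hcz
    rcases hsub z1 h1 with rfl | rfl <;> rcases hsub z2 h2 with rfl | rfl <;>
      simp [huv.ne, huv.ne'] at hcz ⊢
  · intro z _
    by_cases hz : z = u <;> simp [hz]
lemma induce_reachable {G : SimpleGraph V} {s : Set V} :
    ∀ {x y : V} (p : G.Walk x y), (∀ z ∈ p.support, z ∈ s) →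
      ∀ (hx : x ∈ s) (hy : y ∈ s), (G.induce s).Reachable ⟨x, hx⟩ ⟨y, hy⟩
  | x, _, Walk.nil, _, hx, hy => Reachable.refl _
  | x, y, @Walk.cons _ _ _ w _ h q, hp, hx, hy => by
    have hw : w ∈ s := hp w (by simp)
    have hadj : (G.induce s).Adj ⟨x, hx⟩ ⟨w, hw⟩ := h
    exact hadj.reachable.trans
      (induce_reachable q (fun z hz => hp z (by simp [hz])) hw hy)

lemma exists_noncut [Fintype V] (G : SimpleGraph V) (hG : G.Connected) (r : V)
    (h2 : 2 ≤ Fintype.card V) :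
    ∃ a : V, a ≠ r ∧ (G.induce {x | x ≠ a}).Connected := by
  classical
  obtain ⟨a, -, hmax⟩ := Finset.exists_max_image Finset.univ (G.dist r) ⟨r, Finset.mem_univ r⟩
  have hpos : 0 < G.dist r a := by
    obtain ⟨y, hy⟩ := Fintype.exists_ne_of_one_lt_card (by omega) r
    exact lt_of_lt_of_le (hG.pos_dist_of_ne (Ne.symm hy)) (hmax y (Finset.mem_univ y))
  have har : a ≠ r := by
    intro h
    rw [h, SimpleGraph.dist_self] at hpos
    omega
  have hrs : r ∈ {x | x ≠ a} := Ne.symm har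
  refine ⟨a, har, ?_⟩
  rw [connected_iff]
  refine ⟨?_, ⟨⟨r, hrs⟩⟩⟩
  have aux : ∀ x : {x | x ≠ a}, (G.induce {x | x ≠ a}).Reachable x ⟨r, hrs⟩ := by
    rintro ⟨x, hx⟩
    obtain ⟨p, hlen⟩ := hG.exists_walk_length_eq_dist r x
    have hsup : ∀ z ∈ p.support, z ∈ {x | x ≠ a} := by
      intro z hz
      simp only [Set.mem_setOf_eq]
      rintro rfl
      have h1 : G.dist r z ≤ (p.takeUntil z hz).length := SimpleGraph.dist_le _
      have h2 : (p.takeUntil z hz).length + (p.dropUntil z hz).length = p.length := by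
        rw [← Walk.length_append, Walk.take_spec]
      have h3 : (p.dropUntil z hz).length ≠ 0 := by
        intro h0
        exact hx (Walk.eq_of_length_eq_zero h0).symm
      have h4 : G.dist r x ≤ G.dist r z := hmax x (Finset.mem_univ x)
      omega
    exact (induce_reachable p hsup hrs hx).symm
  intro x y
  exact (aux x).trans (aux y).symm
universe u

lemma exists_good_pair : ∀ (n : ℕ) {V : Type u} [Fintype V] (G : SimpleGraph V),
    G.Connected → Fintype.card V = n → 2 ≤ n →
    ∃ a b : V, a ≠ b ∧ ∀ x y : V, ∃ p : G.Walk x y, p.IsPath ∧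
      ∀ z ∈ p.support.tail.dropLast, z ≠ a ∧ z ≠ b := by
  intro n
  induction n using Nat.strong_induction_on with
  | _ n ih =>
  intro V _ G hG hcard h2
  classical
  by_cases hbase : n = 2
  · subst hbase
    obtain ⟨a, b, hab⟩ := Fintype.exists_pair_of_one_lt_card (α := V) (by omega)
    refine ⟨a, b, hab, fun x y => ?_⟩
    obtain ⟨w⟩ := hG.preconnected x y
    obtain ⟨p, hp⟩ := w.toPath
    have hlen : p.support.length ≤ 2 := hp.support_nodup.length_le_card.trans_eq hcard
    have hsl := Walk.length_support p
    have hnil : p.support.tail.dropLast = [] := by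
      rw [← List.length_eq_zero_iff, List.length_dropLast, List.length_tail]
      omega
    exact ⟨p, hp, by rw [hnil]; simp⟩
  · have h3 : 3 ≤ n := by omega
    obtain ⟨r⟩ := hG.nonempty
    obtain ⟨a0, har, hconn'⟩ := exists_noncut G hG r (by omega)
    set s : Set V := {x | x ≠ a0} with hs
    have hcard' : Fintype.card ↥s = n - 1 := by
      have e1 : Fintype.card ↥s = Fintype.card {x : V // ¬ x = a0} :=
        Fintype.card_congr (Equiv.subtypeEquivRight (by simp [hs]))
      rw [e1, Fintype.card_subtype_compl, Fintype.card_subtype_eq, hcard]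
    obtain ⟨a', b', hab', hP'⟩ := ih (n - 1) (by omega) (G.induce s) hconn' hcard' (by omega)
    obtain ⟨z, haz⟩ : ∃ z, G.Adj a0 z := by
      obtain ⟨w⟩ := hG.preconnected a0 r
      cases w with
      | nil => exact absurd rfl har
      | cons h _ => exact ⟨_, h⟩
    have hzs : z ∈ s := haz.ne'
    set z' : ↥s := ⟨z, hzs⟩ with hz'def
    -- K1 : paths between vertices of s
    have K1 : ∀ (x y : V) (hx : x ∈ s) (hy : y ∈ s), ∃ p : G.Walk x y, p.IsPath ∧
        (∀ w ∈ p.support, w ∈ s) ∧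
        ∀ w ∈ p.support.tail.dropLast, w ≠ (a' : V) ∧ w ≠ (b' : V) := by
      intro x y hx hy
      obtain ⟨p', hp', hint'⟩ := hP' ⟨x, hx⟩ ⟨y, hy⟩
      refine ⟨p'.map (Embedding.induce s).toHom,
        Walk.map_isPath_of_injective Subtype.val_injective hp', ?_, ?_⟩
      · intro w hw
        replace hw : w ∈ (p'.map (Embedding.induce s).toHom).support := hw
        rw [Walk.support_map] at hw
        obtain ⟨w0, -, rfl⟩ := List.mem_map.1 hw
        exact w0.2
      · intro w hw
        replace hw : w ∈ (p'.map (Embedding.induce s).toHom).support.tail.dropLast := hw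
        rw [Walk.support_map, ← List.map_tail, ← List.map_dropLast] at hw
        obtain ⟨w0, hw0, rfl⟩ := List.mem_map.1 hw
        have hh := hint' w0 hw0
        exact ⟨fun h => hh.1 (Subtype.ext h), fun h => hh.2 (Subtype.ext h)⟩
    -- K2 : paths from a
    have K2 : ∀ (y : V) (hy : y ∈ s), ∃ p : G.Walk a0 y, p.IsPath ∧
        ∀ w ∈ p.support.tail.dropLast, w ≠ a0 ∧
          (w = z ∨ (w ≠ (a' : V) ∧ w ≠ (b' : V))) := by
      intro y hy
      obtain ⟨q, hq, hqs, hqint⟩ := K1 z y hzs hy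
      refine ⟨Walk.cons haz q, ?_, ?_⟩
      · rw [Walk.cons_isPath_iff]
        exact ⟨hq, fun h => (hqs a0 h) rfl⟩
      · intro w hw
        have hw' : w ∈ q.support.dropLast := by simpa using hw
        have hws : w ∈ s := hqs w (q.support.dropLast_subset hw')
        refine ⟨hws, ?_⟩
        rw [q.support_eq_cons] at hw'
        rcases mem_dropLast_cons hw' with h | h
        · exact Or.inl h
        · exact Or.inr (hqint w h)
    -- uniform finishing lemma
    have finish : ∀ A B : V, A ≠ B →
        (∀ w : V, w ∈ s → w ≠ (a' : V) → w ≠ (b' : V) → w ≠ A ∧ w ≠ B) →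
        (∀ w : V, w ≠ a0 → (w = z ∨ (w ≠ (a' : V) ∧ w ≠ (b' : V))) → w ≠ A ∧ w ≠ B) →
        ∃ a b : V, a ≠ b ∧ ∀ x y : V, ∃ p : G.Walk x y, p.IsPath ∧
          ∀ z ∈ p.support.tail.dropLast, z ≠ a ∧ z ≠ b := by
      intro A B hAB hC1 hC2
      refine ⟨A, B, hAB, ?_⟩
      have main : ∀ x y : V, y ≠ a0 → ∃ p : G.Walk x y, p.IsPath ∧
          ∀ w ∈ p.support.tail.dropLast, w ≠ A ∧ w ≠ B := by
        intro x y hy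
        by_cases hx : x = a0
        · subst hx
          obtain ⟨p, hp, hint⟩ := K2 y hy
          exact ⟨p, hp, fun w hw => hC2 w (hint w hw).1 (hint w hw).2⟩
        · obtain ⟨p, hp, hps, hint⟩ := K1 x y hx hy
          exact ⟨p, hp, fun w hw => hC1 w (hps w ((internal_sublist p).subset hw))
            (hint w hw).1 (hint w hw).2⟩
      intro x y
      by_cases hy : y = a0
      · by_cases hx : x = a0
        · refine ⟨(Walk.nil : G.Walk x x).copy rfl (hx.trans hy.symm), ?_, ?_⟩
          · simp [Walk.isPath_copy]
          · simp [Walk.support_copy]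
        · obtain ⟨p, hp, hint⟩ := main a0 x hx
          refine ⟨(p.reverse).copy rfl hy.symm, ?_, ?_⟩
          · rw [Walk.isPath_copy]
            exact hp.reverse
          · intro w hw
            rw [Walk.support_copy] at hw
            exact hint w (by rwa [internal_reverse, List.mem_reverse] at hw)
      · exact main x y hy
    have hcoe : ∀ {c d : ↥s}, c ≠ d → (c : V) ≠ (d : V) :=
      fun h hh => h (Subtype.ext hh)
    by_cases h1 : z' = a'
    · refine finish a0 (b' : V) (fun h => b'.2 h.symm) ?_ ?_
      · exact fun w hws _ hwb => ⟨hws, hwb⟩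
      · rintro w hwa (rfl | ⟨h1', h2'⟩)
        · refine ⟨hwa, ?_⟩
          have e : w = (a' : V) := congrArg Subtype.val h1
          rw [e]; exact hcoe hab'
        · exact ⟨hwa, h2'⟩
    · by_cases h2 : z' = b'
      · refine finish a0 (a' : V) (fun h => a'.2 h.symm) ?_ ?_
        · exact fun w hws hwa _ => ⟨hws, hwa⟩
        · rintro w hwa (rfl | ⟨h1', h2'⟩)
          · refine ⟨hwa, ?_⟩
            have e : w = (b' : V) := congrArg Subtype.val h2
            rw [e]; exact hcoe (Ne.symm hab')
          · exact ⟨hwa, h1'⟩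
      · refine finish (a' : V) (b' : V) (hcoe hab') ?_ ?_
        · exact fun w _ hwa hwb => ⟨hwa, hwb⟩
        · rintro w hwa (rfl | ⟨h1', h2'⟩)
          · exact ⟨hcoe h1, hcoe h2⟩
          · exact ⟨h1', h2'⟩
lemma rvc_le_card_sub_two {V : Type u} [Fintype V] {G : SimpleGraph V} (hG : G.Connected)
    (h3 : 3 ≤ Fintype.card V) : rvc G ≤ Fintype.card V - 2 := by
  classical
  obtain ⟨a, b, hab, hpath⟩ :=
    exists_good_pair (Fintype.card V) G hG rfl (by omega)
  have hcard2 : Fintype.card {x : V // ¬(x = a ∨ x = b)} = Fintype.card V - 2 := by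
    rw [Fintype.card_subtype_compl]
    congr 1
    rw [Fintype.card_subtype]
    have : (Finset.univ.filter fun x : V => x = a ∨ x = b) = {a, b} := by
      ext x; simp [Finset.mem_insert]
    rw [this, Finset.card_insert_of_notMem (by simpa using hab), Finset.card_singleton]
  set f := Fintype.equivFinOfCardEq hcard2 with hf
  set c : V → ℕ := fun x => if h : ¬(x = a ∨ x = b) then (f ⟨x, h⟩ : ℕ) else 0 with hc
  apply rvc_le (c := c)
  intro x y
  obtain ⟨p, hp, hint⟩ := hpath x y
  refine ⟨p, hp, ?_, ?_⟩
  · refine List.Nodup.map_on ?_ (internal_nodup hp)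
    intro z1 h1 z2 h2 hcz
    have hz1 := hint z1 h1
    have hz2 := hint z2 h2
    rw [hc] at hcz
    simp only [dif_pos (show ¬(z1 = a ∨ z1 = b) by tauto),
      dif_pos (show ¬(z2 = a ∨ z2 = b) by tauto)] at hcz
    have := f.injective (Fin.val_injective hcz)
    exact congrArg Subtype.val this
  · intro z hz
    have hzz := hint z hz
    rw [hc]
    simp only [dif_pos (show ¬(z = a ∨ z = b) by tauto)]
    exact (f ⟨z, _⟩).isLt

end RVCAux

open RVCAux in
theorem rvc_add_compl_le {V : Type*} [Fintype V] (G : SimpleGraph V) (n : ℕ)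
    (hn : 5 ≤ n) (hV : Fintype.card V = n) (hG : G.Connected) (hGc : Gᶜ.Connected) :
    rvc G + rvc Gᶜ ≤ n - 1 := by
  by_cases h1 : ∀ x y : V, x ≠ y → G.Adj x y ∨ ∃ w, G.Adj x w ∧ G.Adj w y
  · by_cases h2 : ∀ x y : V, x ≠ y → Gᶜ.Adj x y ∨ ∃ w, Gᶜ.Adj x w ∧ Gᶜ.Adj w y
    · have b1 := rvc_le_one h1
      have b2 := rvc_le_one h2
      omega
    · have b1 := rvc_le_one h1
      have b2 : rvc Gᶜ ≤ Fintype.card V - 2 := rvc_le_card_sub_two hGc (by omega)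
      omega
  · by_cases h2 : ∀ x y : V, x ≠ y → Gᶜ.Adj x y ∨ ∃ w, Gᶜ.Adj x w ∧ Gᶜ.Adj w y
    · have b2 := rvc_le_one h2
      have b1 : rvc G ≤ Fintype.card V - 2 := rvc_le_card_sub_two hG (by omega)
      omega
    · obtain ⟨u, v, huv, hdom⟩ := dom_of_not_diam2 h1
      have b2 : rvc Gᶜ ≤ 2 := rvc_le_two huv hdom
      obtain ⟨u', v', huv', hdom'⟩ := dom_of_not_diam2 h2
      rw [compl_compl] at huv' hdom'
      have b1 : rvc G ≤ 2 := rvc_le_two huv' hdom'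
      omega
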